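/- Let θ ∈ (0,π)³ with θ₁ ≤ θ₂ ≤ θ₃ and θ₁+θ₂+θ₃ ∈ πℤ. The stabilizer in SU(3) of the ordered pair (V₀, V_θ) is isomorphic to SO(3) if and only if θ₁ = θ₂ = θ₃ (in which case all angles equal π/3 or 2π/3). -/

import Mathlib

open scoped Real ComplexConjugate
open Finset

/-- The standard real subspace `V₀ = ℝⁿ ⊂ ℂⁿ`, the real span of the standard basis. -/
noncomputable def V0 (n : ℕ) : Submodule ℝ (Fin n → ℂ) :=
  Submodule.span ℝ (Set.range fun j => (Pi.single j 1 : Fin n → ℂ))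

/-- The plane `V_θ = {(e^{iθ₁}x₁, …, e^{iθₙ}xₙ) : xⱼ ∈ ℝ}`, i.e. the real span of the vectors
`e^{iθⱼ} eⱼ`. -/
noncomputable def Vtheta (n : ℕ) (θ : Fin n → ℝ) : Submodule ℝ (Fin n → ℂ) :=
  Submodule.span ℝ (Set.range fun j => (Pi.single j (Complex.exp (θ j * Complex.I)) : Fin n → ℂ))

/-- The standard symplectic form `ω₀ = Im h` on `ℂⁿ`, `h` being the standard Hermitian metric. -/
noncomputable def omega0 {n : ℕ} (z w : Fin n → ℂ) : ℝ :=
  (∑ j, conj (z j) * w j).im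

/-- `ω₀` vanishes identically on `V`. -/
def OmegaVanishes {n : ℕ} (V : Submodule ℝ (Fin n → ℂ)) : Prop :=
  ∀ v ∈ V, ∀ w ∈ V, omega0 v w = 0

/-- `Im Ω₀` vanishes identically on `V`, where `Ω₀ = dz₁ ∧ ⋯ ∧ dzₙ` is the standard holomorphic
volume form: for any `n` vectors of `V` the determinant they span has vanishing imaginary part. -/
def ImVolVanishes {n : ℕ} (V : Submodule ℝ (Fin n → ℂ)) : Prop :=
  ∀ b : Fin n → (Fin n → ℂ), (∀ i, b i ∈ V) → ((Matrix.of fun i j => b i j).det).im = 0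

/-- A real `n`-dimensional subspace of `ℂⁿ` is special Lagrangian if `ω₀` and `Im Ω₀` vanish
identically on it. -/
def IsSpecialLagrangian (n : ℕ) (V : Submodule ℝ (Fin n → ℂ)) : Prop :=
  Module.finrank ℝ V = n ∧ OmegaVanishes V ∧ ImVolVanishes V


/-- The action of a complex `n×n` matrix on `ℂⁿ`, as a real-linear map. -/
noncomputable def actL {n : ℕ} (M : Matrix (Fin n) (Fin n) ℂ) :
    (Fin n → ℂ) →ₗ[ℝ] (Fin n → ℂ) :=
  (Matrix.mulVecLin M).restrictScalars ℝ

lemma actL_mul {n : ℕ} (M N : Matrix (Fin n) (Fin n) ℂ) :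
    actL (M * N) = (actL M).comp (actL N) := by
  ext v
  simp [actL, Matrix.mulVecLin_mul]

lemma actL_one {n : ℕ} : actL (1 : Matrix (Fin n) (Fin n) ℂ) = LinearMap.id := by
  ext v
  simp [actL]

/-- The stabilizer in `SU(3)` of the ordered pair of subspaces `(V₀, V_θ)`, realized as a
subgroup of the unitary group `U(3)` (its elements have determinant one, i.e. lie in `SU(3)`). -/
noncomputable def stabSU (θ : Fin 3 → ℝ) : Subgroup (Matrix.unitaryGroup (Fin 3) ℂ) where
  carrier := {B | (B : Matrix (Fin 3) (Fin 3) ℂ).det = 1 ∧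
    Submodule.map (actL (B : Matrix (Fin 3) (Fin 3) ℂ)) (V0 3) = V0 3 ∧
    Submodule.map (actL (B : Matrix (Fin 3) (Fin 3) ℂ)) (Vtheta 3 θ) = Vtheta 3 θ}
  one_mem' := by
    refine ⟨by simp, ?_, ?_⟩ <;>
      simp [actL_one, Submodule.map_id, OneMemClass.coe_one]
  mul_mem' := by
    rintro a b ⟨ha1, ha2, ha3⟩ ⟨hb1, hb2, hb3⟩
    refine ⟨by simp [MulMemClass.coe_mul, Matrix.det_mul, ha1, hb1], ?_, ?_⟩
    · rw [MulMemClass.coe_mul, actL_mul, Submodule.map_comp, hb2, ha2]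
    · rw [MulMemClass.coe_mul, actL_mul, Submodule.map_comp, hb3, ha3]
  inv_mem' := by
    rintro a ⟨ha1, ha2, ha3⟩
    have hinv : ((a⁻¹ : Matrix.unitaryGroup (Fin 3) ℂ) : Matrix (Fin 3) (Fin 3) ℂ) *
        (a : Matrix (Fin 3) (Fin 3) ℂ) = 1 := by
      rw [← MulMemClass.coe_mul, inv_mul_cancel, OneMemClass.coe_one]
    have hdet : ((a⁻¹ : Matrix.unitaryGroup (Fin 3) ℂ) : Matrix (Fin 3) (Fin 3) ℂ).det = 1 := by
      have := congrArg Matrix.det hinv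
      rw [Matrix.det_mul, ha1, mul_one, Matrix.det_one] at this
      exact this
    refine ⟨hdet, ?_, ?_⟩
    · conv_lhs => rw [← ha2]
      rw [← Submodule.map_comp, ← actL_mul, hinv, actL_one, Submodule.map_id]
    · conv_lhs => rw [← ha3]
      rw [← Submodule.map_comp, ← actL_mul, hinv, actL_one, Submodule.map_id]

/-- `SO(3)` as the subgroup of the orthogonal group `O(3)` of matrices of determinant one. -/
noncomputable def SO3 : Subgroup (Matrix.orthogonalGroup (Fin 3) ℝ) where
  carrier := {A | (A : Matrix (Fin 3) (Fin 3) ℝ).det = 1}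
  one_mem' := by simp
  mul_mem' := by
    intro a b ha hb
    simp only [Set.mem_setOf_eq, MulMemClass.coe_mul, Matrix.det_mul] at *
    rw [ha, hb, mul_one]
  inv_mem' := by
    intro a ha
    have hinv : ((a⁻¹ : Matrix.orthogonalGroup (Fin 3) ℝ) : Matrix (Fin 3) (Fin 3) ℝ) *
        (a : Matrix (Fin 3) (Fin 3) ℝ) = 1 := by
      rw [← MulMemClass.coe_mul, inv_mul_cancel, OneMemClass.coe_one]
    have := congrArg Matrix.det hinv
    simp only [Set.mem_setOf_eq] at *
    rw [Matrix.det_mul, ha, mul_one, Matrix.det_one] at this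
    exact this
section Aux

lemma actL_apply' {n : ℕ} (M : Matrix (Fin n) (Fin n) ℂ) (z : Fin n → ℂ) :
    actL M z = M.mulVec z := rfl

/-- The submodule of vectors with all coordinates real. -/
noncomputable def Wre (n : ℕ) : Submodule ℝ (Fin n → ℂ) where
  carrier := {z | ∀ j, (z j).im = 0}
  add_mem' := by intro a b ha hb j; simp [ha j, hb j]
  zero_mem' := by intro j; simp
  smul_mem' := by
    intro r a ha j
    simp [Complex.real_smul, Complex.mul_im, ha j]

noncomputable def Wth (n : ℕ) (θ : Fin n → ℝ) : Submodule ℝ (Fin n → ℂ) where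
  carrier := {z | ∀ j, (Complex.exp (-(θ j : ℂ) * Complex.I) * z j).im = 0}
  add_mem' := by
    intro a b ha hb j
    rw [Pi.add_apply, mul_add, Complex.add_im, ha j, hb j, add_zero]
  zero_mem' := by intro j; simp
  smul_mem' := by
    intro r a ha j
    rw [Pi.smul_apply, Complex.real_smul, mul_left_comm, Complex.mul_im,
      Complex.ofReal_re, Complex.ofReal_im, ha j, zero_mul, mul_zero, add_zero]

lemma mem_V0_iff {n : ℕ} (z : Fin n → ℂ) : z ∈ V0 n ↔ ∀ j, (z j).im = 0 := by
  constructor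
  · intro hz
    have hle : V0 n ≤ Wre n := by
      rw [V0, Submodule.span_le]
      rintro _ ⟨j, rfl⟩ k
      dsimp only
      rw [Pi.single_apply]
      by_cases h : k = j
      · rw [if_pos h, Complex.one_im]
      · rw [if_neg h, Complex.zero_im]
    exact hle hz
  · intro hz
    have hzeq : z = ∑ j, (z j).re • (Pi.single j 1 : Fin n → ℂ) := by
      funext k
      rw [Finset.sum_apply]
      have hterm : ∀ j, ((z j).re • (Pi.single j 1 : Fin n → ℂ)) k
          = if k = j then ((z j).re : ℂ) else 0 := by
        intro j
        rw [Pi.smul_apply, Pi.single_apply]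
        by_cases h : k = j
        · rw [if_pos h, if_pos h, Complex.real_smul, mul_one]
        · rw [if_neg h, if_neg h, smul_zero]
      simp only [hterm, Finset.sum_ite_eq, Finset.mem_univ, if_true]
      exact (Complex.ext (by simp) (by simp [hz k])).symm
    rw [hzeq]
    exact Submodule.sum_mem _ fun j _ =>
      Submodule.smul_mem _ _ (Submodule.subset_span ⟨j, rfl⟩)

lemma exp_neg_mul_exp (x : ℝ) :
    Complex.exp (-(x : ℂ) * Complex.I) * Complex.exp ((x : ℂ) * Complex.I) = 1 := by
  rw [← Complex.exp_add, neg_mul, neg_add_cancel, Complex.exp_zero]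

lemma mem_Vtheta_iff {n : ℕ} (θ : Fin n → ℝ) (z : Fin n → ℂ) :
    z ∈ Vtheta n θ ↔ ∀ j, (Complex.exp (-(θ j : ℂ) * Complex.I) * z j).im = 0 := by
  constructor
  · intro hz
    have hle : Vtheta n θ ≤ Wth n θ := by
      rw [Vtheta, Submodule.span_le]
      rintro _ ⟨j, rfl⟩ i
      dsimp only
      rw [Pi.single_apply]
      by_cases h : i = j
      · subst h
        rw [if_pos rfl, exp_neg_mul_exp, Complex.one_im]
      · rw [if_neg h, mul_zero, Complex.zero_im]
    exact hle hz
  · intro hz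
    have hzeq : z = ∑ j, (Complex.exp (-(θ j : ℂ) * Complex.I) * z j).re •
        (Pi.single j (Complex.exp ((θ j : ℂ) * Complex.I)) : Fin n → ℂ) := by
      funext k
      rw [Finset.sum_apply]
      have hterm : ∀ j, ((Complex.exp (-(θ j : ℂ) * Complex.I) * z j).re •
          (Pi.single j (Complex.exp ((θ j : ℂ) * Complex.I)) : Fin n → ℂ)) k
          = if k = j then ((Complex.exp (-(θ j : ℂ) * Complex.I) * z j).re : ℂ)
              * Complex.exp ((θ j : ℂ) * Complex.I) else 0 := by
        intro j
        rw [Pi.smul_apply, Pi.single_apply]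
        by_cases h : k = j
        · rw [if_pos h, if_pos h, Complex.real_smul]
        · rw [if_neg h, if_neg h, smul_zero]
      simp only [hterm, Finset.sum_ite_eq, Finset.mem_univ, if_true]
      have h2 : (((Complex.exp (-(θ k : ℂ) * Complex.I) * z k).re : ℝ) : ℂ)
          = Complex.exp (-(θ k : ℂ) * Complex.I) * z k :=
        Complex.ext (Complex.ofReal_re _) (by rw [Complex.ofReal_im]; exact (hz k).symm)
      rw [h2, mul_comm (Complex.exp (-(θ k : ℂ) * Complex.I)) (z k), mul_assoc,
        exp_neg_mul_exp (θ k), mul_one]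
    rw [hzeq]
    exact Submodule.sum_mem _ fun j _ =>
      Submodule.smul_mem _ _ (Submodule.subset_span ⟨j, rfl⟩)

lemma map_eq_of_unitary {n : ℕ} {M : Matrix (Fin n) (Fin n) ℂ}
    (hM : M ∈ Matrix.unitaryGroup (Fin n) ℂ) {V : Submodule ℝ (Fin n → ℂ)}
    (h1 : ∀ z ∈ V, M.mulVec z ∈ V) (h2 : ∀ z ∈ V, (star M).mulVec z ∈ V) :
    Submodule.map (actL M) V = V := by
  apply le_antisymm
  · rintro _ ⟨z, hz, rfl⟩
    exact h1 z hz
  · intro z hz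
    refine ⟨(star M).mulVec z, h2 z hz, ?_⟩
    show M.mulVec ((star M).mulVec z) = z
    rw [Matrix.mulVec_mulVec, Matrix.mem_unitaryGroup_iff.mp hM, Matrix.one_mulVec]

lemma star_real {n : ℕ} {M : Matrix (Fin n) (Fin n) ℂ} (h : ∀ i j, (M i j).im = 0) :
    ∀ i j, ((star M) i j).im = 0 := by
  intro i j
  simp [Matrix.star_eq_conjTranspose, Matrix.conjTranspose_apply, h j i]

lemma real_preserves_V0 {n : ℕ} {M : Matrix (Fin n) (Fin n) ℂ}
    (h : ∀ i j, (M i j).im = 0) : ∀ z ∈ V0 n, M.mulVec z ∈ V0 n := by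
  intro z hz
  rw [mem_V0_iff] at hz ⊢
  intro j
  simp only [Matrix.mulVec, dotProduct, Complex.im_sum]
  apply Finset.sum_eq_zero
  intro k _
  rw [Complex.mul_im, h j k, hz k, zero_mul, mul_zero, add_zero]

lemma real_preserves_Vtheta_of_const {M : Matrix (Fin 3) (Fin 3) ℂ}
    (h : ∀ i j, (M i j).im = 0) {θ : Fin 3 → ℝ} (hall : ∀ j, θ j = θ 0) :
    ∀ z ∈ Vtheta 3 θ, M.mulVec z ∈ Vtheta 3 θ := by
  intro z hz
  rw [mem_Vtheta_iff] at hz ⊢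
  intro j
  have hzk : ∀ k, (Complex.exp (-(θ 0 : ℂ) * Complex.I) * z k).im = 0 := by
    intro k
    have := hz k
    rwa [hall k] at this
  rw [hall j]
  simp only [Matrix.mulVec, dotProduct, Finset.mul_sum, Complex.im_sum]
  apply Finset.sum_eq_zero
  intro k _
  rw [mul_left_comm, Complex.mul_im, h j k, hzk k, zero_mul, mul_zero, add_zero]

end Aux
section Aux2

/-- Any matrix preserving `V0` has real entries. -/
lemma stab_real {B : Matrix (Fin 3) (Fin 3) ℂ}
    (h0 : Submodule.map (actL B) (V0 3) = V0 3) : ∀ i j, (B i j).im = 0 := by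
  intro i j
  have hgen : (Pi.single j 1 : Fin 3 → ℂ) ∈ V0 3 := Submodule.subset_span ⟨j, rfl⟩
  have hm : actL B (Pi.single j 1) ∈ V0 3 := h0 ▸ Submodule.mem_map_of_mem hgen
  rw [actL_apply', Matrix.mulVec_single, mem_V0_iff] at hm
  simpa using hm i

lemma exp_sub_eq (a b : ℝ) :
    Complex.exp (-(b : ℂ) * Complex.I) * Complex.exp ((a : ℂ) * Complex.I)
      = Complex.exp (((a - b : ℝ) : ℂ) * Complex.I) := by
  rw [← Complex.exp_add]
  congr 1
  push_cast
  ring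

/-- Block structure: entries between distinct angles vanish. -/
lemma stab_block {θ : Fin 3 → ℝ} (hθ : ∀ j, θ j ∈ Set.Ioo (0 : ℝ) π)
    {B : Matrix (Fin 3) (Fin 3) ℂ} (hre : ∀ i j, (B i j).im = 0)
    (h1 : Submodule.map (actL B) (Vtheta 3 θ) = Vtheta 3 θ) :
    ∀ k j, θ j ≠ θ k → B k j = 0 := by
  intro k j hne
  have hgen : (Pi.single j (Complex.exp ((θ j : ℂ) * Complex.I)) : Fin 3 → ℂ) ∈ Vtheta 3 θ :=
    Submodule.subset_span ⟨j, rfl⟩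
  have hmem : actL B (Pi.single j (Complex.exp ((θ j : ℂ) * Complex.I))) ∈ Vtheta 3 θ :=
    h1 ▸ Submodule.mem_map_of_mem hgen
  rw [actL_apply', Matrix.mulVec_single, mem_Vtheta_iff] at hmem
  have hk : (Complex.exp (-(θ k : ℂ) * Complex.I) *
      (B k j * Complex.exp ((θ j : ℂ) * Complex.I))).im = 0 := hmem k
  have hB : B k j = ((B k j).re : ℂ) :=
    (Complex.ext (Complex.ofReal_re _) (by rw [Complex.ofReal_im]; exact (hre k j).symm)).symm
  rw [hB, mul_left_comm, exp_sub_eq (θ j) (θ k)] at hk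
  have him : (((B k j).re : ℂ) * Complex.exp (((θ j - θ k : ℝ) : ℂ) * Complex.I)).im
      = (B k j).re * Real.sin (θ j - θ k) := by
    rw [Complex.mul_im, Complex.ofReal_re, Complex.ofReal_im, Complex.exp_ofReal_mul_I_im,
      zero_mul, add_zero]
  rw [him] at hk
  have hsin : Real.sin (θ j - θ k) ≠ 0 := by
    obtain ⟨hj0, hjp⟩ := hθ j
    obtain ⟨hk0, hkp⟩ := hθ k
    rcases lt_or_gt_of_ne (sub_ne_zero.mpr hne) with h | h
    · have hpos : 0 < Real.sin (θ k - θ j) :=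
        Real.sin_pos_of_pos_of_lt_pi (by linarith) (by linarith)
      rw [← neg_sub, Real.sin_neg]
      intro hcon
      rw [neg_eq_zero] at hcon
      linarith
    · exact ne_of_gt (Real.sin_pos_of_pos_of_lt_pi (by linarith) (by linarith))
  have hre0 : (B k j).re = 0 := by
    rcases mul_eq_zero.mp hk with h | h
    · exact h
    · exact absurd h hsin
  exact Complex.ext (by rw [hre0, Complex.zero_re]) (by rw [hre k j, Complex.zero_im])

end Aux2
section Aux3

lemma fin3_mk_two (h : 2 < 3) : (⟨2, h⟩ : Fin 3) = 2 := rfl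

/-- The rotation by π/2 about the z-axis. -/
def Pm : Matrix (Fin 3) (Fin 3) ℝ := !![0,-1,0; 1,0,0; 0,0,1]

/-- The rotation by π/2 about the x-axis. -/
def Qm : Matrix (Fin 3) (Fin 3) ℝ := !![1,0,0; 0,0,-1; 0,1,0]

lemma Pm_mem : Pm ∈ Matrix.orthogonalGroup (Fin 3) ℝ := by
  rw [Matrix.mem_orthogonalGroup_iff]
  ext i j
  fin_cases i <;> fin_cases j <;>
    norm_num [fin3_mk_two, Pm, Matrix.mul_apply, Fin.sum_univ_three,
      Matrix.star_eq_conjTranspose, Matrix.conjTranspose_apply, Matrix.one_apply,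
      Matrix.vecHead, Matrix.vecTail, Fin.ext_iff, Matrix.cons_val_two, Matrix.tail_cons,
      Matrix.head_cons]

lemma Qm_mem : Qm ∈ Matrix.orthogonalGroup (Fin 3) ℝ := by
  rw [Matrix.mem_orthogonalGroup_iff]
  ext i j
  fin_cases i <;> fin_cases j <;>
    norm_num [fin3_mk_two, Qm, Matrix.mul_apply, Fin.sum_univ_three,
      Matrix.star_eq_conjTranspose, Matrix.conjTranspose_apply, Matrix.one_apply,
      Matrix.vecHead, Matrix.vecTail, Fin.ext_iff, Matrix.cons_val_two, Matrix.tail_cons,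
      Matrix.head_cons]

lemma Pm_det : Pm.det = 1 := by
  rw [Matrix.det_fin_three]
  norm_num [Pm, Matrix.cons_val_two, Matrix.tail_cons, Matrix.head_cons]

lemma Qm_det : Qm.det = 1 := by
  rw [Matrix.det_fin_three]
  norm_num [Qm, Matrix.cons_val_two, Matrix.tail_cons, Matrix.head_cons]

/-- A matrix commuting with Pm and Qm is scalar. -/
lemma comm_scalar (C : Matrix (Fin 3) (Fin 3) ℝ)
    (hP : C * Pm = Pm * C) (hQ : C * Qm = Qm * C) :
    C = C 0 0 • (1 : Matrix (Fin 3) (Fin 3) ℝ) := by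
  have eP : ∀ i j, (C * Pm) i j = (Pm * C) i j := fun i j => by rw [hP]
  have eQ : ∀ i j, (C * Qm) i j = (Qm * C) i j := fun i j => by rw [hQ]
  have p00 := eP 0 0; have p01 := eP 0 1; have p02 := eP 0 2
  have p10 := eP 1 0; have p12 := eP 1 2
  have p20 := eP 2 0; have p21 := eP 2 1
  have q01 := eQ 0 1; have q02 := eQ 0 2
  have q10 := eQ 1 0; have q11 := eQ 1 1; have q12 := eQ 1 2
  simp only [Matrix.mul_apply, Fin.sum_univ_three, Pm, Qm,
    Matrix.cons_val', Matrix.cons_val_zero, Matrix.cons_val_one, Matrix.head_cons,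
    Matrix.empty_val', Matrix.cons_val_fin_one, Matrix.head_fin_const,
    Matrix.cons_val_two, Matrix.tail_cons, Matrix.of_apply,
    mul_zero, mul_one, mul_neg, zero_mul, one_mul, neg_mul, zero_add, add_zero,
    neg_zero] at p00 p01 p02 p10 p12 p20 p21 q01 q02 q10 q11 q12
  rw [Matrix.eta_fin_three C, Matrix.one_fin_three]
  ext i j
  fin_cases i <;> fin_cases j <;> simp [fin3_mk_two, Matrix.vecHead, Matrix.vecTail] <;> linarith

/-- Any element of SO3 commuting with everything is the identity. -/
lemma SO3_central_eq_one (c : SO3) (hc : ∀ d : SO3, c * d = d * c) : c = 1 := by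
  set C : Matrix (Fin 3) (Fin 3) ℝ :=
    ((c : Matrix.orthogonalGroup (Fin 3) ℝ) : Matrix (Fin 3) (Fin 3) ℝ) with hC
  have hcomm : ∀ (M : Matrix (Fin 3) (Fin 3) ℝ) (hM : M ∈ Matrix.orthogonalGroup (Fin 3) ℝ)
      (hMd : M.det = 1), C * M = M * C := by
    intro M hM hMd
    have h1 := hc ⟨⟨M, hM⟩, hMd⟩
    have h2 := congrArg (fun x : SO3 =>
      ((x : Matrix.orthogonalGroup (Fin 3) ℝ) : Matrix (Fin 3) (Fin 3) ℝ)) h1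
    simpa using h2
  have hP := hcomm Pm Pm_mem Pm_det
  have hQ := hcomm Qm Qm_mem Qm_det
  have hscalar := comm_scalar C hP hQ
  set a : ℝ := C 0 0 with ha
  have hdet : C.det = 1 := c.prop
  have hdet' : a ^ 3 = 1 := by
    rw [hscalar, Matrix.det_smul, Matrix.det_one, mul_one] at hdet
    simpa using hdet
  have horth : C * star C = 1 := (Matrix.mem_orthogonalGroup_iff _ _).mp c.1.prop
  have hsq : a ^ 2 = 1 := by
    have h1 := congrFun (congrFun horth 0) 0
    rw [hscalar] at h1
    simp only [Matrix.star_eq_conjTranspose, Matrix.conjTranspose_smul, Matrix.conjTranspose_one,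
      star_trivial, Matrix.smul_mul, Matrix.mul_smul, Matrix.one_mul,
      Matrix.smul_apply, Matrix.one_apply, smul_eq_mul] at h1
    norm_num at h1
    nlinarith [h1]
  have haone : a = 1 := by nlinarith [hsq, hdet']
  have hC1 : C = 1 := by rw [hscalar, haone, one_smul]
  exact Subtype.ext (Subtype.ext hC1)

end Aux3
section Aux4

lemma diag_unitary {ε : Fin 3 → ℝ} (hsq : ∀ j, ε j * ε j = 1) :
    (Matrix.diagonal fun j => (ε j : ℂ)) ∈ Matrix.unitaryGroup (Fin 3) ℂ := by
  rw [Matrix.mem_unitaryGroup_iff, Matrix.star_eq_conjTranspose, Matrix.diagonal_conjTranspose,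
    Matrix.diagonal_mul_diagonal]
  have hfun : (fun i => (ε i : ℂ) * star (fun j => (ε j : ℂ)) i) = fun _ => (1 : ℂ) := by
    funext j
    rw [Pi.star_apply, Complex.star_def, Complex.conj_ofReal, ← Complex.ofReal_mul, hsq j,
      Complex.ofReal_one]
  rw [hfun, Matrix.diagonal_one]

lemma diag_real_entries (ε : Fin 3 → ℝ) :
    ∀ i j, ((Matrix.diagonal fun j => (ε j : ℂ)) i j).im = 0 := by
  intro i j
  rw [Matrix.diagonal_apply]
  by_cases h : i = j
  · rw [if_pos h]; simp
  · rw [if_neg h]; simp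

lemma diag_star_real (ε : Fin 3 → ℝ) :
    star (Matrix.diagonal fun j => (ε j : ℂ)) = Matrix.diagonal fun j => (ε j : ℂ) := by
  rw [Matrix.star_eq_conjTranspose, Matrix.diagonal_conjTranspose]
  have hst : (star fun j => (ε j : ℂ)) = fun j => (ε j : ℂ) := by
    funext j
    rw [Pi.star_apply, Complex.star_def, Complex.conj_ofReal]
  rw [hst]

lemma diag_preserves_Vtheta (ε : Fin 3 → ℝ) (θ : Fin 3 → ℝ) :
    ∀ z ∈ Vtheta 3 θ, (Matrix.diagonal fun j => (ε j : ℂ)).mulVec z ∈ Vtheta 3 θ := by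
  intro z hz
  rw [mem_Vtheta_iff] at hz ⊢
  intro j
  rw [Matrix.mulVec_diagonal, mul_left_comm, Complex.mul_im,
    Complex.ofReal_re, Complex.ofReal_im, hz j, zero_mul, mul_zero, add_zero]

lemma diag_mem_stab {θ : Fin 3 → ℝ} {ε : Fin 3 → ℝ} (hsq : ∀ j, ε j * ε j = 1)
    (hdet : ε 0 * ε 1 * ε 2 = 1) :
    (⟨_, diag_unitary hsq⟩ : Matrix.unitaryGroup (Fin 3) ℂ) ∈ stabSU θ := by
  refine ⟨?_, ?_, ?_⟩
  · show (Matrix.diagonal fun j => (ε j : ℂ)).det = 1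
    rw [Matrix.det_diagonal, Fin.prod_univ_three, ← Complex.ofReal_mul, ← Complex.ofReal_mul,
      hdet, Complex.ofReal_one]
  · exact map_eq_of_unitary (diag_unitary hsq) (real_preserves_V0 (diag_real_entries ε))
      (by rw [diag_star_real]; exact real_preserves_V0 (diag_real_entries ε))
  · exact map_eq_of_unitary (diag_unitary hsq) (diag_preserves_Vtheta ε θ)
      (by rw [diag_star_real]; exact diag_preserves_Vtheta ε θ)

lemma central_of_eps (θ : Fin 3 → ℝ) (hθ : ∀ j, θ j ∈ Set.Ioo (0 : ℝ) π)
    (ε : Fin 3 → ℝ) (hsq : ∀ j, ε j * ε j = 1) (hdet : ε 0 * ε 1 * ε 2 = 1)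
    (hε1 : ε 1 = -1) (hcls : ∀ j k, θ j = θ k → ε j = ε k) :
    ∃ x : stabSU θ, x ≠ 1 ∧ ∀ y : stabSU θ, x * y = y * x := by
  refine ⟨⟨⟨_, diag_unitary hsq⟩, diag_mem_stab hsq hdet⟩, ?_, ?_⟩
  · intro hcon
    have h : ((ε 1 : ℝ) : ℂ) = 1 := by
      have h2 := congrArg (fun x : stabSU θ =>
        ((x : Matrix.unitaryGroup (Fin 3) ℂ) : Matrix (Fin 3) (Fin 3) ℂ) 1 1) hcon
      simpa [OneMemClass.coe_one, Matrix.one_apply, Matrix.diagonal_apply_eq] using h2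
    rw [hε1] at h
    norm_num at h
  · intro y
    obtain ⟨hy1, hy2, hy3⟩ := y.prop
    have hre : ∀ i j,
        (((y : Matrix.unitaryGroup (Fin 3) ℂ) : Matrix (Fin 3) (Fin 3) ℂ) i j).im = 0 :=
      stab_real hy2
    have hblock : ∀ k j, θ j ≠ θ k →
        ((y : Matrix.unitaryGroup (Fin 3) ℂ) : Matrix (Fin 3) (Fin 3) ℂ) k j = 0 :=
      stab_block hθ hre hy3
    apply Subtype.ext
    apply Subtype.ext
    show (Matrix.diagonal fun j => (ε j : ℂ)) *
        ((y : Matrix.unitaryGroup (Fin 3) ℂ) : Matrix (Fin 3) (Fin 3) ℂ)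
      = ((y : Matrix.unitaryGroup (Fin 3) ℂ) : Matrix (Fin 3) (Fin 3) ℂ) *
        Matrix.diagonal fun j => (ε j : ℂ)
    ext k j
    rw [Matrix.diagonal_mul, Matrix.mul_diagonal]
    by_cases h : θ j = θ k
    · rw [hcls k j h.symm]
      ring
    · rw [hblock k j h, mul_zero, zero_mul]

/-- If the angles are not all equal, the stabilizer has a nontrivial central element. -/
lemma exists_central (θ : Fin 3 → ℝ) (hθ : ∀ j, θ j ∈ Set.Ioo (0 : ℝ) π)
    (hmono : Monotone θ) (hne : ¬(θ 0 = θ 1 ∧ θ 1 = θ 2)) :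
    ∃ x : stabSU θ, x ≠ 1 ∧ ∀ y : stabSU θ, x * y = y * x := by
  have h01 : θ 0 ≤ θ 1 := hmono (by decide : (0 : Fin 3) ≤ 1)
  have h12 : θ 1 ≤ θ 2 := hmono (by decide : (1 : Fin 3) ≤ 2)
  have h02 : θ 0 ≠ θ 2 := by
    intro h
    exact hne ⟨le_antisymm h01 (h ▸ h12), le_antisymm h12 (h ▸ h01)⟩
  by_cases hc : θ 0 = θ 1
  · have hc2 : θ 1 ≠ θ 2 := fun h => hne ⟨hc, h⟩
    refine central_of_eps θ hθ ![-1, -1, 1] (by intro j; fin_cases j <;> norm_num)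
      (by norm_num [Matrix.cons_val_two, Matrix.tail_cons, Matrix.head_cons]) (by norm_num) ?_
    intro j k hjk
    fin_cases j <;> fin_cases k <;> simp_all [fin3_mk_two]
  · refine central_of_eps θ hθ ![1, -1, -1] (by intro j; fin_cases j <;> norm_num)
      (by norm_num [Matrix.cons_val_two, Matrix.tail_cons, Matrix.head_cons]) (by norm_num) ?_
    intro j k hjk
    fin_cases j <;> fin_cases k <;> simp_all [fin3_mk_two]

end Aux4
section Aux5

lemma mem_stab_iff {θ : Fin 3 → ℝ} (hall : ∀ j, θ j = θ 0)
    (B : Matrix.unitaryGroup (Fin 3) ℂ) :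
    B ∈ stabSU θ ↔ ((B : Matrix (Fin 3) (Fin 3) ℂ).det = 1 ∧
      ∀ i j, ((B : Matrix (Fin 3) (Fin 3) ℂ) i j).im = 0) := by
  constructor
  · rintro ⟨h1, h2, h3⟩
    exact ⟨h1, stab_real h2⟩
  · rintro ⟨h1, h2⟩
    refine ⟨h1, ?_, ?_⟩
    · exact map_eq_of_unitary B.prop (real_preserves_V0 h2)
        (real_preserves_V0 (star_real h2))
    · exact map_eq_of_unitary B.prop (real_preserves_Vtheta_of_const h2 hall)
        (real_preserves_Vtheta_of_const (star_real h2) hall)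

/-- Complexification of a real matrix. -/
noncomputable def cMat (A : Matrix (Fin 3) (Fin 3) ℝ) : Matrix (Fin 3) (Fin 3) ℂ :=
  A.map Complex.ofReal

/-- Real part of a complex matrix. -/
noncomputable def rMat (B : Matrix (Fin 3) (Fin 3) ℂ) : Matrix (Fin 3) (Fin 3) ℝ :=
  B.map Complex.re

lemma cMat_apply (A : Matrix (Fin 3) (Fin 3) ℝ) (i j : Fin 3) : cMat A i j = (A i j : ℂ) := rfl

lemma rMat_apply (B : Matrix (Fin 3) (Fin 3) ℂ) (i j : Fin 3) : rMat B i j = (B i j).re := rfl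

lemma cMat_rMat {B : Matrix (Fin 3) (Fin 3) ℂ} (h : ∀ i j, (B i j).im = 0) :
    cMat (rMat B) = B := by
  ext i j
  rw [cMat_apply, rMat_apply]
  exact Complex.ext (Complex.ofReal_re _) (by rw [Complex.ofReal_im]; exact (h i j).symm)

lemma rMat_cMat (A : Matrix (Fin 3) (Fin 3) ℝ) : rMat (cMat A) = A := by
  ext i j
  rw [rMat_apply, cMat_apply, Complex.ofReal_re]

lemma cMat_real (A : Matrix (Fin 3) (Fin 3) ℝ) : ∀ i j, (cMat A i j).im = 0 := by
  intro i j
  rw [cMat_apply, Complex.ofReal_im]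

lemma cMat_inj {A B : Matrix (Fin 3) (Fin 3) ℝ} (h : cMat A = cMat B) : A = B := by
  ext i j
  have := congrFun (congrFun h i) j
  rw [cMat_apply, cMat_apply] at this
  exact_mod_cast this

lemma cMat_mul (A B : Matrix (Fin 3) (Fin 3) ℝ) : cMat (A * B) = cMat A * cMat B := by
  ext i j
  rw [cMat_apply, Matrix.mul_apply, Matrix.mul_apply]
  push_cast
  rfl

lemma cMat_one : cMat 1 = 1 := by
  ext i j
  rw [cMat_apply, Matrix.one_apply, Matrix.one_apply, apply_ite Complex.ofReal,
    Complex.ofReal_one, Complex.ofReal_zero]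

lemma cMat_transpose (A : Matrix (Fin 3) (Fin 3) ℝ) : star (cMat A) = cMat A.transpose := by
  ext i j
  rw [Matrix.star_eq_conjTranspose, Matrix.conjTranspose_apply, cMat_apply, cMat_apply,
    Matrix.transpose_apply, Complex.star_def, Complex.conj_ofReal]

lemma cMat_det (A : Matrix (Fin 3) (Fin 3) ℝ) : (cMat A).det = (A.det : ℂ) := by
  have h1 : cMat A = (Complex.ofRealHom : ℝ →+* ℂ).mapMatrix A := by
    ext i j
    rw [cMat_apply, RingHom.mapMatrix_apply, Matrix.map_apply]
    rfl
  rw [h1, ← RingHom.map_det]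
  rfl

lemma star_real_mat (A : Matrix (Fin 3) (Fin 3) ℝ) : star A = A.transpose := by
  ext i j
  rw [Matrix.star_eq_conjTranspose, Matrix.conjTranspose_apply, Matrix.transpose_apply,
    star_trivial]

lemma cMat_orth_unitary {A : Matrix (Fin 3) (Fin 3) ℝ}
    (hA : A ∈ Matrix.orthogonalGroup (Fin 3) ℝ) :
    cMat A ∈ Matrix.unitaryGroup (Fin 3) ℂ := by
  rw [Matrix.mem_unitaryGroup_iff, cMat_transpose, ← cMat_mul]
  have h1 : A * A.transpose = 1 := by
    have := (Matrix.mem_orthogonalGroup_iff _ _).mp hA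
    exact this
  rw [h1, cMat_one]

lemma rMat_orth {B : Matrix (Fin 3) (Fin 3) ℂ} (hB : B ∈ Matrix.unitaryGroup (Fin 3) ℂ)
    (h : ∀ i j, (B i j).im = 0) : rMat B ∈ Matrix.orthogonalGroup (Fin 3) ℝ := by
  rw [Matrix.mem_orthogonalGroup_iff]
  apply cMat_inj
  rw [cMat_mul, ← cMat_transpose, cMat_rMat h, cMat_one]
  exact Matrix.mem_unitaryGroup_iff.mp hB

/-- The isomorphism between the stabilizer and SO(3) when all angles are equal. -/
noncomputable def stabEquiv {θ : Fin 3 → ℝ} (hall : ∀ j, θ j = θ 0) :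
    stabSU θ ≃* SO3 where
  toFun B := ⟨⟨rMat ((B : Matrix.unitaryGroup (Fin 3) ℂ) : Matrix (Fin 3) (Fin 3) ℂ),
      rMat_orth (B : Matrix.unitaryGroup (Fin 3) ℂ).prop
        (((mem_stab_iff hall _).mp B.prop).2)⟩, by
    show (rMat _).det = 1
    have hre := ((mem_stab_iff hall _).mp B.prop).2
    have hdet := ((mem_stab_iff hall _).mp B.prop).1
    have : ((rMat ((B : Matrix.unitaryGroup (Fin 3) ℂ) : Matrix (Fin 3) (Fin 3) ℂ)).det : ℂ)
        = 1 := by rw [← cMat_det, cMat_rMat hre, hdet]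
    exact_mod_cast this⟩
  invFun A := ⟨⟨cMat ((A : Matrix.orthogonalGroup (Fin 3) ℝ) : Matrix (Fin 3) (Fin 3) ℝ),
      cMat_orth_unitary (A : Matrix.orthogonalGroup (Fin 3) ℝ).prop⟩, by
    rw [mem_stab_iff hall]
    constructor
    · show (cMat _).det = 1
      rw [cMat_det, A.prop, Complex.ofReal_one]
    · exact cMat_real _⟩
  left_inv B := by
    apply Subtype.ext
    apply Subtype.ext
    show cMat (rMat _) = _
    exact cMat_rMat (((mem_stab_iff hall _).mp B.prop).2)
  right_inv A := by
    apply Subtype.ext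
    apply Subtype.ext
    show rMat (cMat _) = _
    exact rMat_cMat _
  map_mul' x y := by
    apply Subtype.ext
    apply Subtype.ext
    show rMat _ = rMat _ * rMat _
    apply cMat_inj
    have hxy := ((mem_stab_iff hall _).mp (x * y).prop).2
    have hx := ((mem_stab_iff hall _).mp x.prop).2
    have hy := ((mem_stab_iff hall _).mp y.prop).2
    rw [cMat_mul, cMat_rMat hx, cMat_rMat hy, cMat_rMat hxy]
    rfl

end Aux5

/-- For nondecreasing `θ ∈ (0,π)³` with `Σθ ∈ πℤ`, the stabilizer in `SU(3)`
of `(V₀, V_θ)` is isomorphic to `SO(3)` iff `θ₁ = θ₂ = θ₃` (in which case the common angle is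
`π/3` or `2π/3`). -/
theorem stabilizer_iso_SO3_iff (θ : Fin 3 → ℝ)
    (hθ : ∀ j, θ j ∈ Set.Ioo (0 : ℝ) π) (hmono : Monotone θ)
    (hsum : ∃ k : ℤ, (∑ j, θ j) = k * π) :
    (Nonempty (stabSU θ ≃* SO3) ↔ (θ 0 = θ 1 ∧ θ 1 = θ 2)) ∧
    ((θ 0 = θ 1 ∧ θ 1 = θ 2) → θ 0 = π / 3 ∨ θ 0 = 2 * π / 3) := by
  constructor
  · constructor
    · rintro ⟨φ⟩
      by_contra hne
      obtain ⟨x, hx1, hxc⟩ := exists_central θ hθ hmono hne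
      have hcen : ∀ d : SO3, φ x * d = d * φ x := by
        intro d
        calc φ x * d = φ x * φ (φ.symm d) := by rw [φ.apply_symm_apply]
          _ = φ (x * φ.symm d) := (map_mul φ _ _).symm
          _ = φ (φ.symm d * x) := by rw [hxc (φ.symm d)]
          _ = φ (φ.symm d) * φ x := map_mul φ _ _
          _ = d * φ x := by rw [φ.apply_symm_apply]
      have hone := SO3_central_eq_one (φ x) hcen
      exact hx1 (φ.injective (by rw [hone, map_one]))
    · rintro ⟨h1, h2⟩
      have hall : ∀ j, θ j = θ 0 := by
        intro j
        fin_cases j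
        · rfl
        · exact h1.symm
        · exact (h1.trans h2).symm
      exact ⟨stabEquiv hall⟩
  · rintro ⟨h1, h2⟩
    obtain ⟨k, hk⟩ := hsum
    rw [Fin.sum_univ_three] at hk
    have hsum3 : 3 * θ 0 = (k : ℝ) * π := by linarith [h1, h2, hk]
    obtain ⟨hp0, hpπ⟩ := hθ 0
    have hπ := Real.pi_pos
    have hk0 : (0 : ℝ) < (k : ℝ) := by nlinarith
    have hk3 : ((k : ℝ)) < 3 := by nlinarith
    have hk0' : 0 < k := by exact_mod_cast hk0
    have hk3' : k < 3 := by exact_mod_cast hk3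
    interval_cases k
    · left
      push_cast at hsum3
      linarith
    · right
      push_cast at hsum3
      linarith
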